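/- Lipschitz continuity of the visitation measure in policies: for any two joint policies π, π' with direct parameterizations x, x', and any state s, | d̃_ρ^π[s] − d̃_ρ^{π'}[s] | ≤ (1/ζ²) ‖x − x'‖₁. -/

import Mathlib

set_option maxHeartbeats 1000000


open Finset

section MarkovGame

variable {S : Type} [Fintype S] [DecidableEq S] {n : ℕ}

/-- Probability of the joint action `a` at state `s` under the product policy `x`. -/
noncomputable def MGjointProb (A : Fin n → Type) [∀ i, Fintype (A i)]
    (x : ∀ i, S → A i → ℝ) (s : S) (a : ∀ i, A i) : ℝ :=
  ∏ i, x i s (a i)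

/-- One-step pushforward of a (sub)distribution `μ` over states under policy `x`
and transition kernel `P`. -/
noncomputable def MGstep (A : Fin n → Type) [∀ i, Fintype (A i)]
    (P : S → (∀ i, A i) → S → ℝ) (x : ∀ i, S → A i → ℝ) (μ : S → ℝ) : S → ℝ :=
  fun s' => ∑ s, ∑ a : ∀ i, A i, μ s * MGjointProb A x s a * P s a s'

/-- Unnormalized state visitation measure `d̃_ρ^π[s] = Σ_{h≥0} P^π(s_h = s | s₀ ~ ρ)`. -/
noncomputable def MGocc (A : Fin n → Type) [∀ i, Fintype (A i)]
    (P : S → (∀ i, A i) → S → ℝ) (x : ∀ i, S → A i → ℝ) (ρ : S → ℝ) (s : S) : ℝ :=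
  ∑' h : ℕ, (MGstep A P x)^[h] ρ s

/-- Value of player `i`: `V_i^π(ρ) = Σ_{h≥0} E[R_i(s_h, a_h)]`. -/
noncomputable def MGval (A : Fin n → Type) [∀ i, Fintype (A i)]
    (P : S → (∀ i, A i) → S → ℝ) (R : Fin n → S → (∀ i, A i) → ℝ)
    (i : Fin n) (x : ∀ i, S → A i → ℝ) (ρ : S → ℝ) : ℝ :=
  ∑' h : ℕ, ∑ s, ((MGstep A P x)^[h] ρ) s * ∑ a : ∀ i, A i, MGjointProb A x s a * R i s a

/-- `Q`-function of player `i`: `Q_i^π(s,a) = R_i(s,a) + Σ_{s'} P(s'|s,a) V_i^π(δ_{s'})`. -/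
noncomputable def MGQ (A : Fin n → Type) [∀ i, Fintype (A i)]
    (P : S → (∀ i, A i) → S → ℝ) (R : Fin n → S → (∀ i, A i) → ℝ)
    (i : Fin n) (x : ∀ i, S → A i → ℝ) (s : S) (a : ∀ i, A i) : ℝ :=
  R i s a + ∑ s', P s a s' * MGval A P R i x (fun t => if t = s' then (1 : ℝ) else 0)

end MarkovGame


/-- Telescoping bound on differences of product distributions. -/
lemma prodDiffLe : ∀ {n : ℕ} (A : Fin n → Type) [∀ i, Fintype (A i)]
    (p q : ∀ i, A i → ℝ), (∀ i a, 0 ≤ p i a) → (∀ i a, 0 ≤ q i a) →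
    (∀ i, ∑ a, p i a = 1) → (∀ i, ∑ a, q i a = 1) →
    ∑ a : ∀ i, A i, |(∏ i, p i (a i)) - ∏ i, q i (a i)| ≤ ∑ i, ∑ b, |p i b - q i b|
  | 0, A, _, p, q, hp, hq, hps, hqs => by simp
  | (m+1), A, _, p, q, hp, hq, hps, hqs => by
    have IH := prodDiffLe (fun i : Fin m => A i.succ) (fun i => p i.succ) (fun i => q i.succ)
      (fun i a => hp i.succ a) (fun i a => hq i.succ a)
      (fun i => hps i.succ) (fun i => hqs i.succ)
    have hre : ∑ a : ∀ i, A i, |(∏ i, p i (a i)) - ∏ i, q i (a i)|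
        = ∑ b : A 0, ∑ c : ∀ i : Fin m, A i.succ,
          |p 0 b * (∏ i : Fin m, p i.succ (c i)) - q 0 b * (∏ i : Fin m, q i.succ (c i))| := by
      rw [← Equiv.sum_comp (Fin.consEquiv A), Fintype.sum_prod_type]
      apply Finset.sum_congr rfl; intro b _
      apply Finset.sum_congr rfl; intro c _
      simp [Fin.consEquiv, Fin.prod_univ_succ]
    rw [hre, Fin.sum_univ_succ]
    have hQ1 : ∑ c : ∀ i : Fin m, A i.succ, ∏ i : Fin m, q i.succ (c i) = 1 := by
      rw [show (∑ c : ∀ i : Fin m, A i.succ, ∏ i : Fin m, q i.succ (c i))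
          = ∏ i : Fin m, ∑ a : A i.succ, q i.succ a from
        (Fintype.prod_sum (fun (i : Fin m) (a : A i.succ) => q i.succ a)).symm]
      simp [hqs]
    calc ∑ b : A 0, ∑ c : ∀ i : Fin m, A i.succ,
          |p 0 b * (∏ i : Fin m, p i.succ (c i)) - q 0 b * (∏ i : Fin m, q i.succ (c i))|
        ≤ ∑ b : A 0, ∑ c : ∀ i : Fin m, A i.succ,
          (p 0 b * |(∏ i : Fin m, p i.succ (c i)) - ∏ i : Fin m, q i.succ (c i)|
            + |p 0 b - q 0 b| * (∏ i : Fin m, q i.succ (c i))) := by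
          apply Finset.sum_le_sum; intro b _
          apply Finset.sum_le_sum; intro c _
          have key : p 0 b * (∏ i : Fin m, p i.succ (c i)) - q 0 b * (∏ i : Fin m, q i.succ (c i))
              = p 0 b * ((∏ i : Fin m, p i.succ (c i)) - ∏ i : Fin m, q i.succ (c i))
                + (p 0 b - q 0 b) * (∏ i : Fin m, q i.succ (c i)) := by ring
          rw [key]
          refine (abs_add_le _ _).trans ?_
          rw [abs_mul, abs_mul, abs_of_nonneg (hp 0 b),
            abs_of_nonneg (Finset.prod_nonneg fun i _ => hq i.succ (c i))]
      _ = (∑ b : A 0, p 0 b) * (∑ c : ∀ i : Fin m, A i.succ,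
            |(∏ i : Fin m, p i.succ (c i)) - ∏ i : Fin m, q i.succ (c i)|)
          + (∑ b : A 0, |p 0 b - q 0 b|) * (∑ c : ∀ i : Fin m, A i.succ,
            ∏ i : Fin m, q i.succ (c i)) := by
          simp only [Finset.sum_add_distrib, ← Finset.mul_sum]
          rw [← Finset.sum_mul, ← Finset.sum_mul]
      _ ≤ (∑ b : A 0, |p 0 b - q 0 b|) + ∑ i : Fin m, ∑ b, |p i.succ b - q i.succ b| := by
          rw [hps 0, hQ1, one_mul, mul_one, add_comm]
          exact add_le_add_right (by simpa using IH) _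

set_option linter.unusedSectionVars false

section AuxMG

variable {S : Type} [Fintype S] [DecidableEq S] {n : ℕ}
  (A : Fin n → Type) [∀ i, Fintype (A i)]
  (P : S → (∀ i, A i) → S → ℝ)

lemma jointProb_nonneg (x : ∀ i, S → A i → ℝ)
    (hx : ∀ i s, x i s ∈ stdSimplex ℝ (A i)) (s : S) (a : ∀ i, A i) :
    0 ≤ MGjointProb A x s a :=
  Finset.prod_nonneg fun i _ => (hx i s).1 (a i)

lemma jointProb_sum (x : ∀ i, S → A i → ℝ)
    (hx : ∀ i s, x i s ∈ stdSimplex ℝ (A i)) (s : S) :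
    ∑ a : ∀ i, A i, MGjointProb A x s a = 1 := by
  rw [show (∑ a : ∀ i, A i, MGjointProb A x s a)
      = ∏ i, ∑ b : A i, x i s b from
    (Fintype.prod_sum (fun (i : Fin n) (b : A i) => x i s b)).symm]
  simp [fun i => (hx i s).2]

lemma jointProb_absdiff_le (x x' : ∀ i, S → A i → ℝ)
    (hx : ∀ i s, x i s ∈ stdSimplex ℝ (A i)) (hx' : ∀ i s, x' i s ∈ stdSimplex ℝ (A i))
    (s : S) :
    ∑ a : ∀ i, A i, |MGjointProb A x s a - MGjointProb A x' s a|
      ≤ ∑ i, ∑ b : A i, |x i s b - x' i s b| :=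
  prodDiffLe A (fun i => x i s) (fun i => x' i s)
    (fun i a => (hx i s).1 a) (fun i a => (hx' i s).1 a)
    (fun i => (hx i s).2) (fun i => (hx' i s).2)

lemma MGstep_l1 (ζ : ℝ) (hζ1 : ζ ≤ 1)
    (hPpos : ∀ s a s', 0 ≤ P s a s') (hPmass : ∀ s a, ∑ s', P s a s' ≤ 1 - ζ)
    (x : ∀ i, S → A i → ℝ) (hx : ∀ i s, x i s ∈ stdSimplex ℝ (A i))
    (μ : S → ℝ) :
    ∑ s', |MGstep A P x μ s'| ≤ (1 - ζ) * ∑ s0, |μ s0| := by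
  calc ∑ s', |MGstep A P x μ s'|
      ≤ ∑ s', ∑ s0, ∑ a : ∀ i, A i, |μ s0| * MGjointProb A x s0 a * P s0 a s' := by
        apply Finset.sum_le_sum; intro s' _
        refine (Finset.abs_sum_le_sum_abs _ _).trans ?_
        apply Finset.sum_le_sum; intro s0 _
        refine (Finset.abs_sum_le_sum_abs _ _).trans ?_
        apply Finset.sum_le_sum; intro a _
        rw [abs_mul, abs_mul, abs_of_nonneg (jointProb_nonneg A x hx s0 a),
          abs_of_nonneg (hPpos s0 a s')]
    _ = ∑ s0, ∑ a : ∀ i, A i, |μ s0| * MGjointProb A x s0 a * ∑ s', P s0 a s' := by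
        rw [Finset.sum_comm]
        refine Finset.sum_congr rfl fun s0 _ => ?_
        rw [Finset.sum_comm]
        exact Finset.sum_congr rfl fun a _ => (Finset.mul_sum _ _ _).symm
    _ ≤ ∑ s0, ∑ a : ∀ i, A i, |μ s0| * MGjointProb A x s0 a * (1 - ζ) := by
        apply Finset.sum_le_sum; intro s0 _
        apply Finset.sum_le_sum; intro a _
        exact mul_le_mul_of_nonneg_left (hPmass s0 a)
          (mul_nonneg (abs_nonneg _) (jointProb_nonneg A x hx s0 a))
    _ = (1 - ζ) * ∑ s0, |μ s0| := by
        rw [Finset.mul_sum]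
        refine Finset.sum_congr rfl fun s0 _ => ?_
        rw [show (∑ a : ∀ i, A i, |μ s0| * MGjointProb A x s0 a * (1 - ζ))
            = |μ s0| * (1 - ζ) * ∑ a : ∀ i, A i, MGjointProb A x s0 a by
          rw [Finset.mul_sum]; exact Finset.sum_congr rfl fun a _ => by ring]
        rw [jointProb_sum A x hx s0]; ring

lemma MGstep_sub (x : ∀ i, S → A i → ℝ) (μ ν : S → ℝ) (s' : S) :
    MGstep A P x μ s' - MGstep A P x ν s' = MGstep A P x (fun t => μ t - ν t) s' := by
  simp only [MGstep, ← Finset.sum_sub_distrib]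
  refine Finset.sum_congr rfl fun s0 _ => Finset.sum_congr rfl fun a _ => by ring

lemma MGstep_diff (ζ : ℝ) (hζ0 : 0 < ζ) (hζ1 : ζ ≤ 1)
    (hPpos : ∀ s a s', 0 ≤ P s a s') (hPmass : ∀ s a, ∑ s', P s a s' ≤ 1 - ζ)
    (x x' : ∀ i, S → A i → ℝ)
    (hx : ∀ i s, x i s ∈ stdSimplex ℝ (A i)) (hx' : ∀ i s, x' i s ∈ stdSimplex ℝ (A i))
    (μ : S → ℝ) :
    ∑ s', |MGstep A P x μ s' - MGstep A P x' μ s'|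
      ≤ (∑ s0, |μ s0|) * ∑ i, ∑ s0, ∑ b : A i, |x i s0 b - x' i s0 b| := by
  have hPmass1 : ∀ s a, ∑ s', P s a s' ≤ 1 := fun s a => (hPmass s a).trans (by linarith)
  have hd : ∀ s', MGstep A P x μ s' - MGstep A P x' μ s'
      = ∑ s0, ∑ a : ∀ i, A i,
          μ s0 * (MGjointProb A x s0 a - MGjointProb A x' s0 a) * P s0 a s' := by
    intro s'
    simp only [MGstep, ← Finset.sum_sub_distrib]
    exact Finset.sum_congr rfl fun s0 _ => Finset.sum_congr rfl fun a _ => by ring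
  calc ∑ s', |MGstep A P x μ s' - MGstep A P x' μ s'|
      ≤ ∑ s', ∑ s0, ∑ a : ∀ i, A i,
          |μ s0| * |MGjointProb A x s0 a - MGjointProb A x' s0 a| * P s0 a s' := by
        apply Finset.sum_le_sum; intro s' _
        rw [hd s']
        refine (Finset.abs_sum_le_sum_abs _ _).trans ?_
        apply Finset.sum_le_sum; intro s0 _
        refine (Finset.abs_sum_le_sum_abs _ _).trans ?_
        apply Finset.sum_le_sum; intro a _
        rw [abs_mul, abs_mul, abs_of_nonneg (hPpos s0 a s')]
    _ = ∑ s0, ∑ a : ∀ i, A i,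
          |μ s0| * |MGjointProb A x s0 a - MGjointProb A x' s0 a| * ∑ s', P s0 a s' := by
        rw [Finset.sum_comm]
        refine Finset.sum_congr rfl fun s0 _ => ?_
        rw [Finset.sum_comm]
        exact Finset.sum_congr rfl fun a _ => (Finset.mul_sum _ _ _).symm
    _ ≤ ∑ s0, ∑ a : ∀ i, A i,
          |μ s0| * |MGjointProb A x s0 a - MGjointProb A x' s0 a| * 1 := by
        apply Finset.sum_le_sum; intro s0 _
        apply Finset.sum_le_sum; intro a _
        exact mul_le_mul_of_nonneg_left (hPmass1 s0 a)
          (mul_nonneg (abs_nonneg _) (abs_nonneg _))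
    _ = ∑ s0, |μ s0| * ∑ a : ∀ i, A i,
          |MGjointProb A x s0 a - MGjointProb A x' s0 a| := by
        refine Finset.sum_congr rfl fun s0 _ => ?_
        rw [Finset.mul_sum]
        exact Finset.sum_congr rfl fun a _ => by ring
    _ ≤ ∑ s0, |μ s0| * ∑ i, ∑ t, ∑ b : A i, |x i t b - x' i t b| := by
        apply Finset.sum_le_sum; intro s0 _
        refine mul_le_mul_of_nonneg_left ?_ (abs_nonneg _)
        refine (jointProb_absdiff_le A x x' hx hx' s0).trans ?_
        apply Finset.sum_le_sum; intro i _
        exact Finset.single_le_sum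
          (f := fun t => ∑ b : A i, |x i t b - x' i t b|)
          (fun t _ => Finset.sum_nonneg fun b _ => abs_nonneg _) (Finset.mem_univ s0)
    _ = (∑ s0, |μ s0|) * ∑ i, ∑ t, ∑ b : A i, |x i t b - x' i t b| :=
        (Finset.sum_mul _ _ _).symm

end AuxMG


/-- Lipschitz continuity of the visitation measure in the policy: for any two joint
policies `π, π'` with direct parameterizations `x, x'` and any state `s`,
`|d̃_ρ^π[s] − d̃_ρ^{π'}[s]| ≤ (1/ζ²) ‖x − x'‖₁`. -/
theorem occupancy_lipschitz_in_policy {S : Type} [Fintype S] [DecidableEq S] {n : ℕ}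
    (A : Fin n → Type) [∀ i, Fintype (A i)]
    (P : S → (∀ i, A i) → S → ℝ) (ζ : ℝ) (hζ : 0 < ζ) (hζ1 : ζ ≤ 1)
    (hPpos : ∀ s a s', 0 ≤ P s a s')
    (hPmass : ∀ s a, ∑ s', P s a s' ≤ 1 - ζ)
    (x x' : ∀ i, S → A i → ℝ)
    (hx : ∀ i s, x i s ∈ stdSimplex ℝ (A i)) (hx' : ∀ i s, x' i s ∈ stdSimplex ℝ (A i))
    (ρ : S → ℝ) (hρ : ρ ∈ stdSimplex ℝ S) (s : S) :
    |MGocc A P x ρ s - MGocc A P x' ρ s| ≤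
      (1 / ζ ^ 2) * ∑ i, ∑ s', ∑ ai : A i, |x i s' ai - x' i s' ai| := by
  classical
  set D := ∑ i, ∑ s', ∑ ai : A i, |x i s' ai - x' i s' ai| with hDdef
  have hD0 : 0 ≤ D := Finset.sum_nonneg fun i _ => Finset.sum_nonneg fun t _ =>
    Finset.sum_nonneg fun b _ => abs_nonneg _
  set r : ℝ := 1 - ζ with hrdef
  have hr0 : 0 ≤ r := by simp only [hrdef]; linarith
  have hr1 : r < 1 := by simp only [hrdef]; linarith
  have hζ' : 1 - r = ζ := by simp [hrdef]
  have hρabs : ∑ s0, |ρ s0| = 1 := by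
    rw [← hρ.2]; exact Finset.sum_congr rfl fun t _ => abs_of_nonneg (hρ.1 t)
  -- L1 contraction along iterates
  have base : ∀ (y : ∀ i, S → A i → ℝ), (∀ i t, y i t ∈ stdSimplex ℝ (A i)) →
      ∀ h : ℕ, ∑ s0, |(MGstep A P y)^[h] ρ s0| ≤ r ^ h := by
    intro y hy h
    induction h with
    | zero => simp [hρabs]
    | succ k ihk =>
      rw [Function.iterate_succ_apply']
      calc ∑ s0, |MGstep A P y ((MGstep A P y)^[k] ρ) s0|
          ≤ r * ∑ s0, |(MGstep A P y)^[k] ρ s0| :=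
            MGstep_l1 A P ζ hζ1 hPpos hPmass y hy _
        _ ≤ r * r ^ k := mul_le_mul_of_nonneg_left ihk hr0
        _ = r ^ (k + 1) := by rw [pow_succ]; ring
  -- key difference bound
  have key : ∀ h : ℕ, ∑ s0, |(MGstep A P x)^[h] ρ s0 - (MGstep A P x')^[h] ρ s0|
      ≤ D * h * r ^ (h - 1) := by
    intro h
    induction h with
    | zero => simp
    | succ k ihk =>
      rw [Function.iterate_succ_apply', Function.iterate_succ_apply']
      push_cast
      set a := (MGstep A P x)^[k] ρ with ha
      set b := (MGstep A P x')^[k] ρ with hb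
      calc ∑ s0, |MGstep A P x a s0 - MGstep A P x' b s0|
          ≤ ∑ s0, (|MGstep A P x a s0 - MGstep A P x b s0|
              + |MGstep A P x b s0 - MGstep A P x' b s0|) := by
            apply Finset.sum_le_sum; intro s0 _
            exact abs_sub_le _ _ _
        _ = (∑ s0, |MGstep A P x a s0 - MGstep A P x b s0|)
              + ∑ s0, |MGstep A P x b s0 - MGstep A P x' b s0| :=
            Finset.sum_add_distrib
        _ ≤ r * (D * k * r ^ (k - 1)) + r ^ k * D := by
            apply add_le_add
            · have e : ∀ s0, MGstep A P x a s0 - MGstep A P x b s0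
                  = MGstep A P x (fun t => a t - b t) s0 := MGstep_sub A P x a b
              calc (∑ s0, |MGstep A P x a s0 - MGstep A P x b s0|)
                  = ∑ s0, |MGstep A P x (fun t => a t - b t) s0| := by
                    exact Finset.sum_congr rfl fun s0 _ => by rw [e s0]
                _ ≤ r * ∑ s0, |a s0 - b s0| :=
                    MGstep_l1 A P ζ hζ1 hPpos hPmass x hx _
                _ ≤ r * (D * k * r ^ (k - 1)) := mul_le_mul_of_nonneg_left ihk hr0
            · calc (∑ s0, |MGstep A P x b s0 - MGstep A P x' b s0|)
                  ≤ (∑ s0, |b s0|) * D :=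
                    MGstep_diff A P ζ hζ hζ1 hPpos hPmass x x' hx hx' b
                _ ≤ r ^ k * D := mul_le_mul_of_nonneg_right (base x' hx' k) hD0
        _ ≤ D * (k + 1) * r ^ (k + 1 - 1) := by
            have hk : (k + 1 : ℕ) - 1 = k := rfl
            rw [hk]
            cases k with
            | zero => simp
            | succ m =>
              have h1 : (m + 1 : ℕ) - 1 = m := rfl
              rw [h1]
              refine le_of_eq ?_
              rw [pow_succ]; push_cast; ring
  -- pointwise bounds
  set f : ℕ → ℝ := fun h => (MGstep A P x)^[h] ρ s with hfdef
  set g : ℕ → ℝ := fun h => (MGstep A P x')^[h] ρ s with hgdef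
  have hpt : ∀ (y : ∀ i, S → A i → ℝ), (∀ i t, y i t ∈ stdSimplex ℝ (A i)) →
      ∀ h : ℕ, |(MGstep A P y)^[h] ρ s| ≤ r ^ h := by
    intro y hy h
    refine le_trans ?_ (base y hy h)
    exact Finset.single_le_sum (f := fun s0 => |(MGstep A P y)^[h] ρ s0|)
      (fun t _ => abs_nonneg _) (Finset.mem_univ s)
  have hfs : Summable f :=
    Summable.of_norm_bounded (summable_geometric_of_lt_one hr0 hr1)
      (fun h => by simpa [Real.norm_eq_abs] using hpt x hx h)
  have hgs : Summable g :=
    Summable.of_norm_bounded (summable_geometric_of_lt_one hr0 hr1)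
      (fun h => by simpa [Real.norm_eq_abs] using hpt x' hx' h)
  have key2 : ∀ h : ℕ, |f h - g h| ≤ D * ((h : ℝ) * r ^ (h - 1)) := by
    intro h
    refine le_trans ?_ ((key h).trans_eq (by ring))
    exact Finset.single_le_sum
      (f := fun s0 => |(MGstep A P x)^[h] ρ s0 - (MGstep A P x')^[h] ρ s0|)
      (fun t _ => abs_nonneg _) (Finset.mem_univ s)
  -- summability of the dominating series
  have hrnorm : ‖r‖ < 1 := by rwa [Real.norm_eq_abs, abs_of_nonneg hr0]
  have hu1 : Summable (fun h : ℕ => ((h : ℝ) + 1) * r ^ h) := by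
    have h1 := summable_pow_mul_geometric_of_norm_lt_one 1 hrnorm (R := ℝ)
    have h2 := summable_geometric_of_lt_one hr0 hr1
    simpa [pow_one, add_mul, one_mul] using h1.add h2
  have hu : Summable (fun h : ℕ => (h : ℝ) * r ^ (h - 1)) := by
    apply (summable_nat_add_iff 1).1
    simpa using hu1
  have husum : ∑' h : ℕ, (h : ℝ) * r ^ (h - 1) = 1 / ζ ^ 2 := by
    rw [hu.tsum_eq_zero_add]
    simp only [Nat.cast_zero, zero_mul, zero_add, Nat.cast_add, Nat.cast_one,
      Nat.add_sub_cancel]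
    have e1 : ∑' h : ℕ, ((h : ℝ) + 1) * r ^ h
        = (∑' h : ℕ, (h : ℝ) * r ^ h) + ∑' h : ℕ, r ^ h := by
      rw [← Summable.tsum_add (by simpa [pow_one] using
          summable_pow_mul_geometric_of_norm_lt_one 1 hrnorm (R := ℝ))
        (summable_geometric_of_lt_one hr0 hr1)]
      exact tsum_congr fun h => by ring
    rw [e1, tsum_coe_mul_geometric_of_norm_lt_one hrnorm,
      tsum_geometric_of_lt_one hr0 hr1, hζ']
    field_simp
    rw [hrdef]; ring
  -- assemble
  have hΔs : Summable (fun h : ℕ => |f h - g h|) :=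
    Summable.of_nonneg_of_le (fun h => abs_nonneg _) key2 (hu.mul_left D)
  have hocc : MGocc A P x ρ s - MGocc A P x' ρ s = ∑' h : ℕ, (f h - g h) := by
    rw [hfs.tsum_sub hgs]; rfl
  rw [hocc]
  calc |∑' h : ℕ, (f h - g h)|
      ≤ ∑' h : ℕ, |f h - g h| := by
        have h1 : Summable fun h : ℕ => ‖f h - g h‖ := by
          simpa [Real.norm_eq_abs] using hΔs
        simpa [Real.norm_eq_abs] using norm_tsum_le_tsum_norm h1
    _ ≤ ∑' h : ℕ, D * ((h : ℝ) * r ^ (h - 1)) := hΔs.tsum_le_tsum key2 (hu.mul_left D)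
    _ = D * (1 / ζ ^ 2) := by rw [tsum_mul_left, husum]
    _ = (1 / ζ ^ 2) * D := mul_comm _ _
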